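/- Revised task-interval feasibility for SoftCumulative: if Σ_{a∈S} W(a) > Σ_{t ∈ [lo, hi)} (ideal_capa + max(D(costVar[t]))), then the SoftCumulative constraint has no solution. -/

import Mathlib

lemma soft_aux_filter_Ico (lo hi sa da : ℤ) :
    (Finset.Ico lo hi).filter (fun t => sa ≤ t ∧ t < sa + da)
      = Finset.Ico (max lo sa) (min hi (sa + da)) := by
  ext t
  simp only [Finset.mem_filter, Finset.mem_Ico, max_le_iff, lt_min_iff]
  omega

lemma soft_aux_W_le {lo hi sa da ra rmina smina smaxa : ℤ}
    (hdur : 1 ≤ da) (hrmin : 0 < rmina) (hr : rmina ≤ ra)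
    (hsmin : smina ≤ sa) (hsmax : sa ≤ smaxa) (hlo : lo ≤ smina) :
    rmina * min da (max 0 (hi - smaxa))
      ≤ ∑ t ∈ Finset.Ico lo hi, (if sa ≤ t ∧ t < sa + da then ra else 0) := by
  rw [← Finset.sum_filter, soft_aux_filter_Ico, Finset.sum_const, Int.card_Ico,
    nsmul_eq_mul]
  have hcard : (((min hi (sa + da)) - max lo sa).toNat : ℤ)
      = max ((min hi (sa + da)) - max lo sa) 0 := Int.toNat_eq_max _
  rw [hcard]
  have h1 : min da (max 0 (hi - smaxa)) ≤ max ((min hi (sa + da)) - max lo sa) 0 := by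
    omega
  have h2 : 0 ≤ min da (max 0 (hi - smaxa)) := by omega
  calc rmina * min da (max 0 (hi - smaxa))
      ≤ ra * min da (max 0 (hi - smaxa)) := by
        exact mul_le_mul_of_nonneg_right hr h2
    _ ≤ ra * max ((min hi (sa + da)) - max lo sa) 0 := by
        exact mul_le_mul_of_nonneg_left h1 (by linarith)
    _ = max ((min hi (sa + da)) - max lo sa) 0 * ra := mul_comm _ _

/-- Revised task-interval feasibility for SoftCumulative: if
`∑_{a ∈ S} W a > ∑_{t ∈ [lo,hi)} (ideal_capa + cmax t)` then no instantiation
satisfying the per-time-point bound `h_t ≤ ideal_capa + c t` (with `c t ≤ cmax t`)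
exists. -/
theorem soft_task_interval_infeasible {α : Type*} [DecidableEq α]
    (A : Finset α) (dur smin smax rmin : α → ℤ)
    (hdur : ∀ a ∈ A, 1 ≤ dur a) (hrmin : ∀ a ∈ A, 0 < rmin a)
    (lo hi ideal_capa : ℤ) (hlohi : lo < hi)
    (c cmax : ℤ → ℤ) (hc : ∀ t, c t ≤ cmax t)
    (s r : α → ℤ)
    (hsmin : ∀ a ∈ A, smin a ≤ s a) (hsmax : ∀ a ∈ A, s a ≤ smax a)
    (hr : ∀ a ∈ A, rmin a ≤ r a)
    (hW : ∑ t ∈ Finset.Ico lo hi, (ideal_capa + cmax t) <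
      ∑ a ∈ A.filter (fun a => lo ≤ smin a ∧ smin a < hi),
        rmin a * min (dur a) (max 0 (hi - smax a))) :
    ¬ (∀ t, ∑ a ∈ A.filter (fun a => s a ≤ t ∧ t < s a + dur a), r a
        ≤ ideal_capa + c t) := by
  intro h
  have hub : ∑ t ∈ Finset.Ico lo hi,
      (∑ a ∈ A.filter (fun a => s a ≤ t ∧ t < s a + dur a), r a)
      ≤ ∑ t ∈ Finset.Ico lo hi, (ideal_capa + cmax t) :=
    Finset.sum_le_sum fun t _ => (h t).trans (add_le_add_right (hc t) _)
  have hswap : ∑ t ∈ Finset.Ico lo hi,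
      (∑ a ∈ A.filter (fun a => s a ≤ t ∧ t < s a + dur a), r a)
      = ∑ a ∈ A, ∑ t ∈ Finset.Ico lo hi,
          (if s a ≤ t ∧ t < s a + dur a then r a else 0) := by
    calc ∑ t ∈ Finset.Ico lo hi,
        (∑ a ∈ A.filter (fun a => s a ≤ t ∧ t < s a + dur a), r a)
        = ∑ t ∈ Finset.Ico lo hi, ∑ a ∈ A,
            (if s a ≤ t ∧ t < s a + dur a then r a else 0) :=
          Finset.sum_congr rfl fun t _ => (Finset.sum_filter _ _)
      _ = _ := Finset.sum_comm
  have hlb : ∑ a ∈ A.filter (fun a => lo ≤ smin a ∧ smin a < hi),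
      rmin a * min (dur a) (max 0 (hi - smax a))
      ≤ ∑ a ∈ A, ∑ t ∈ Finset.Ico lo hi,
          (if s a ≤ t ∧ t < s a + dur a then r a else 0) := by
    refine le_trans (Finset.sum_le_sum ?_)
      (Finset.sum_le_sum_of_subset_of_nonneg (Finset.filter_subset _ _) ?_)
    · intro a ha
      rw [Finset.mem_filter] at ha
      exact soft_aux_W_le (hdur a ha.1) (hrmin a ha.1) (hr a ha.1)
        (hsmin a ha.1) (hsmax a ha.1) ha.2.1
    · intro a ha _
      refine Finset.sum_nonneg fun t _ => ?_
      split
      · exact le_of_lt (lt_of_lt_of_le (hrmin a ha) (hr a ha))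
      · exact le_refl 0
  rw [hswap] at hub
  exact absurd (hlb.trans hub) (not_le.mpr hW)
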